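/- Let P be a finite partial order, C a category, (X, φ, F, ψ) a C-structured P-datum with cylinder Cyl(X), and let Y be a finite partial order with a functor G : Y ⥤ C. Then restriction along the slice inclusions x ↦ (p,x) defines a bijection between: (A) pairs (f, η) where f : Cyl(X) → Y is monotone and η assigns to each (p,x) ∈ Cyl(X) a morphism η_{(p,x)} : G(f(p,x)) → F p(x) in C such that for every relation (p,x) ≤ (q,y) in Cyl(X) the cylinder structure map F p(x) → F q(y) composed with η_{(p,x)} equals η_{(q,y)} composed with G(f(p,x) ≤ f(q,y)); and (B) families ((f_p, η_p))_{p ∈ P} where f_p : X p → Y is monotone and η_p assigns to each x ∈ X p a morphism (η_p)_x : G(f_p(x)) → F p(x) satisfying F p(x ≤ x') ∘ (η_p)_x = (η_p)_{x'} ∘ G(f_p(x) ≤ f_p(x')) for all x ≤ x' in X p, subject to the lax compatibility conditions: for all p ≤ q in P and y ∈ X q, f_p(φ_{p q}(y)) ≤ f_q(y) in Y and (ψ_{p q})_y ∘ (η_p)_{φ_{p q}(y)} = (η_q)_y ∘ G(f_p(φ_{p q}(y)) ≤ f_q(y)). (This is the universal property exhibiting the cylinder as the poset-indexed lax colimit in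 the category of C-data.) -/

import Mathlib

/-!
STATEMENT 4: the universal property of the cylinder of a `C`-structured `P`-datum as the
poset-indexed lax colimit in the category of `C`-data: restriction along the slice
inclusions `x ↦ (p, x)` is a bijection between pairs `(f, η)` on the cylinder and
lax-compatible families `((f_p, η_p))_{p ∈ P}`.
-/

open CategoryTheory

universe u v

structure PosetDatum (P : Type) [PartialOrder P] (X : P → Type) [∀ p, PartialOrder (X p)] where
  φ : ∀ {p q : P}, p ≤ q → X q →o X p
  φ_refl : ∀ (p : P) (x : X p), φ (le_refl p) x = x
  φ_trans : ∀ {p q r : P} (hpq : p ≤ q) (hqr : q ≤ r) (z : X r),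
      φ (hpq.trans hqr) z = φ hpq (φ hqr z)

variable {P : Type} [PartialOrder P] {X : P → Type} [∀ p, PartialOrder (X p)]

/-- The cylinder of a `P`-datum of posets, as a type. -/
def Cylinder (_D : PosetDatum P X) : Type := Σ p, X p

/-- The point of the cylinder determined by `p : P` and `x : X p`. -/
def Cylinder.mk (D : PosetDatum P X) (p : P) (x : X p) : Cylinder D := Sigma.mk p x

/-- The cylinder partial order: `(p, x) ≤ (q, y)` iff `p ≤ q` and `x ≤ φ_{p q} y`. -/
instance (D : PosetDatum P X) : PartialOrder (Cylinder D) where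
  le a b := ∃ h : Sigma.fst a ≤ Sigma.fst b, Sigma.snd a ≤ D.φ h (Sigma.snd b)
  le_refl a := ⟨le_refl _, by rw [D.φ_refl]⟩
  le_trans a b c := by
    rintro ⟨h1, hx1⟩ ⟨h2, hx2⟩
    exact ⟨h1.trans h2, by
      rw [D.φ_trans h1 h2]
      exact hx1.trans ((D.φ h1).monotone hx2)⟩
  le_antisymm a b := by
    obtain ⟨p, x⟩ := a
    obtain ⟨q, y⟩ := b
    rintro ⟨h1, hx1⟩ ⟨h2, hx2⟩
    obtain rfl : p = q := le_antisymm h1 h2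
    obtain rfl : x = y :=
      le_antisymm (hx1.trans_eq (D.φ_refl p y)) (hx2.trans_eq (D.φ_refl p x))
    rfl

theorem Cylinder.mk_le_mk {D : PosetDatum P X} {p q : P} {x : X p} {y : X q}
    (h1 : p ≤ q) (h2 : x ≤ D.φ h1 y) : Cylinder.mk D p x ≤ Cylinder.mk D q y :=
  ⟨h1, h2⟩

/-- A `C`-structure on a `P`-datum of posets. -/
structure CStruct (D : PosetDatum P X) (C : Type u) [Category.{v} C] (F : ∀ p, X p ⥤ C) where
  ψ : ∀ {p q : P} (h : p ≤ q) (y : X q), (F p).obj (D.φ h y) ⟶ (F q).obj y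
  ψ_natural : ∀ {p q : P} (h : p ≤ q) {y y' : X q} (hy : y ≤ y'),
      (F p).map (homOfLE ((D.φ h).monotone hy)) ≫ ψ h y' = ψ h y ≫ (F q).map (homOfLE hy)
  ψ_refl : ∀ (p : P) (y : X p),
      ψ (le_refl p) y = eqToHom (congrArg (F p).obj (D.φ_refl p y))
  ψ_trans : ∀ {p q r : P} (hpq : p ≤ q) (hqr : q ≤ r) (z : X r),
      ψ (hpq.trans hqr) z =
        eqToHom (congrArg (F p).obj (D.φ_trans hpq hqr z)) ≫ ψ hpq (D.φ hqr z) ≫ ψ hqr z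

/-- The cylinder structure map attached to a relation `(p, x) ≤ (q, y)` of the cylinder. -/
def cylMap {D : PosetDatum P X} {C : Type u} [Category.{v} C] {F : ∀ p, X p ⥤ C}
    (S : CStruct D C F) {p q : P} {x : X p} {y : X q} (h1 : p ≤ q) (h2 : x ≤ D.φ h1 y) :
    (F p).obj x ⟶ (F q).obj y :=
  (F p).map (homOfLE h2) ≫ S.ψ h1 y

section

variable (D : PosetDatum P X) {C : Type u} [Category.{v} C] (F : ∀ p, X p ⥤ C)
  (Y : Type) [PartialOrder Y] (G : Y ⥤ C)

/-- The raw data of side (A): a monotone map `f` on the cylinder together with morphisms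
`η_{(p,x)} : G (f (p, x)) ⟶ F p (x)`. -/
structure RawA where
  f : Cylinder D →o Y
  η : ∀ (p : P) (x : X p), G.obj (f (Cylinder.mk D p x)) ⟶ (F p).obj x

/-- The raw data of side (B): monotone maps `f_p : X p → Y` together with morphisms
`(η_p)_x : G (f_p x) ⟶ F p (x)`. -/
structure RawB where
  f : ∀ p : P, X p →o Y
  η : ∀ (p : P) (x : X p), G.obj (f p x) ⟶ (F p).obj x

variable {D F Y G}

/-- Condition on side (A): compatibility of `η` with the cylinder structure maps. -/
def CondA (S : CStruct D C F) (a : RawA D F Y G) : Prop :=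
  ∀ {p q : P} {x : X p} {y : X q} (h1 : p ≤ q) (h2 : x ≤ D.φ h1 y),
    a.η p x ≫ cylMap S h1 h2 =
      G.map (homOfLE (a.f.monotone (Cylinder.mk_le_mk h1 h2))) ≫ a.η q y

/-- Condition on side (B): naturality of each `η_p` together with the lax compatibility
conditions over `p ≤ q`. -/
def CondB (S : CStruct D C F) (b : RawB F Y G) : Prop :=
  (∀ (p : P) {x x' : X p} (h : x ≤ x'),
      b.η p x ≫ (F p).map (homOfLE h) =
        G.map (homOfLE ((b.f p).monotone h)) ≫ b.η p x') ∧
  (∀ {p q : P} (h : p ≤ q) (y : X q), b.f p (D.φ h y) ≤ b.f q y) ∧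
  (∀ {p q : P} (h : p ≤ q) (y : X q) (hf : b.f p (D.φ h y) ≤ b.f q y),
      b.η p (D.φ h y) ≫ S.ψ h y = G.map (homOfLE hf) ≫ b.η q y)

/-- Restriction along the slice inclusions `x ↦ (p, x)`. -/
def restrictRaw (a : RawA D F Y G) : RawB F Y G where
  f p := ⟨fun x => a.f (Cylinder.mk D p x), fun x x' h =>
    a.f.monotone (Cylinder.mk_le_mk (le_refl p) (by rw [D.φ_refl]; exact h))⟩
  η p x := a.η p x


theorem restrict_condB (S : CStruct D C F) (a : RawA D F Y G) (ha : CondA S a) :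
    CondB S (restrictRaw a) := by
  refine ⟨?_, ?_, ?_⟩
  · intro p x x' h
    have h2 : x ≤ D.φ (le_refl p) x' := by rw [D.φ_refl]; exact h
    have := ha (le_refl p) h2
    rw [cylMap, S.ψ_refl, ← eqToHom_map (F p) (D.φ_refl p x'), ← Functor.map_comp] at this
    have hmaps : (homOfLE h2 ≫ eqToHom (D.φ_refl p x') : x ⟶ x') = homOfLE h :=
      Subsingleton.elim _ _
    rw [hmaps] at this
    exact this.trans (by congr 1)
  · intro p q h y
    exact a.f.monotone (Cylinder.mk_le_mk h (le_refl _))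
  · intro p q h y hf
    have := ha h (le_refl (D.φ h y))
    rw [cylMap, show homOfLE (le_refl (D.φ h y)) = 𝟙 (D.φ h y) from rfl,
      CategoryTheory.Functor.map_id, Category.id_comp] at this
    exact this.trans (by congr 1)

/-- Extension: build data on the cylinder from a compatible family. -/
def extendRaw (S : CStruct D C F) (b : RawB F Y G) (hb : CondB S b) : RawA D F Y G where
  f := ⟨fun a => b.f a.1 a.2, fun a c hac =>
    le_trans ((b.f a.1).monotone hac.2) (hb.2.1 hac.1 c.2)⟩
  η p x := b.η p x

theorem extend_condA (S : CStruct D C F) (b : RawB F Y G) (hb : CondB S b) : CondA S (extendRaw S b hb) := by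
  intro p q x y h1 h2
  show b.η p x ≫ cylMap S h1 h2 = _
  rw [cylMap, ← Category.assoc, hb.1 p h2, Category.assoc,
    hb.2.2 h1 y (hb.2.1 h1 y), ← Category.assoc, ← G.map_comp, homOfLE_comp]
  rfl

theorem cylinder_universal_property
    (hP : Finite P) (hX : ∀ p, Finite (X p)) (hY : Finite Y) (S : CStruct D C F) :
    ∃ e : {a : RawA D F Y G // CondA S a} ≃ {b : RawB F Y G // CondB S b},
      ∀ a : {a : RawA D F Y G // CondA S a}, (e a).1 = restrictRaw a.1 := by
  refine ⟨⟨fun a => ⟨restrictRaw a.1, restrict_condB S a.1 a.2⟩,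
    fun b => ⟨extendRaw S b.1 b.2, extend_condA S b.1 b.2⟩,
    fun a => rfl, fun b => rfl⟩, fun a => rfl⟩


end
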